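/- Let M(S) = M(S_0,...,S_r) be a freedom matroid, where S is linearly ordered and each S_i is an initial segment of S, and let ρ be its rank function. If A ⊆ S, a ∈ A, and b ∈ S \ A satisfies b > a in S, then ρ((A \ {a}) ∪ {b}) ≥ ρ(A). -/

import Mathlib

open Matroid Set

/-- The rank of a set `X` in a matroid `M`: the largest cardinality of an independent
subset of `X`. -/
noncomputable def matRk {α : Type*} (M : Matroid α) (X : Set α) : ℕ :=
  sSup {k : ℕ | ∃ I : Set α, I ⊆ X ∧ M.Indep I ∧ I.ncard = k}

/-- Let `M(S) = M(S₀,…,S_r)` be a freedom matroid on a linearly ordered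
set `S` in which each `Sᵢ` is an initial segment of `S`, with rank function `ρ`.
If `A ⊆ S`, `a ∈ A`, and `b ∈ S \ A` satisfies `b > a`, then
`ρ((A \ {a}) ∪ {b}) ≥ ρ(A)`. -/
theorem freedom_matroid_exchange_up {α : Type*} [LinearOrder α]
    (S : Set α) (hS : S.Finite) (r : ℕ)
    (F : ℕ → Set α) (hFr : F r = S) (hchain : ∀ i < r, F i ⊂ F (i + 1))
    (hinit : ∀ i ≤ r, ∀ x ∈ S, ∀ y ∈ F i, x ≤ y → x ∈ F i)
    (M : Matroid α) (hE : M.E = S)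
    (hInd : ∀ I : Set α, M.Indep I ↔ I ⊆ S ∧ ∀ i ≤ r, (I ∩ F i).ncard ≤ i)
    (A : Set α) (hA : A ⊆ S) (a : α) (ha : a ∈ A)
    (b : α) (hb : b ∈ S \ A) (hab : a < b) :
    matRk M A ≤ matRk M ((A \ {a}) ∪ {b}) := by
  set T := (A \ {a}) ∪ {b} with hTdef
  have hbd : ∀ X : Set α, BddAbove {k : ℕ | ∃ I : Set α, I ⊆ X ∧ M.Indep I ∧ I.ncard = k} := by
    intro X
    refine ⟨S.ncard, ?_⟩
    rintro k ⟨I, hIX, hIind, rfl⟩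
    have hIS : I ⊆ S := ((hInd I).1 hIind).1
    exact ncard_le_ncard hIS hS
  have hne : ∃ I : Set α, I ⊆ A ∧ M.Indep I ∧ I.ncard = matRk M A := by
    have h0 : (0 : ℕ) ∈ {k : ℕ | ∃ I : Set α, I ⊆ A ∧ M.Indep I ∧ I.ncard = k} := by
      refine ⟨∅, empty_subset _, ?_, by simp⟩
      rw [hInd]
      exact ⟨empty_subset _, fun i _ => by simp⟩
    have := Nat.sSup_mem ⟨0, h0⟩ (hbd A)
    exact this
  obtain ⟨I, hIA, hIind, hIcard⟩ := hne
  have hIS : I ⊆ S := ((hInd I).1 hIind).1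
  have hIfin : I.Finite := hS.subset hIS
  have hbS : b ∈ S := hb.1
  have hbA : b ∉ A := hb.2
  have hbI : b ∉ I := fun h => hbA (hIA h)
  by_cases haI : a ∈ I
  · -- exchange a for b in I
    set I' := insert b (I \ {a}) with hI'def
    have hI'T : I' ⊆ T := by
      rintro x (rfl | ⟨hxI, hxa⟩)
      · exact Or.inr rfl
      · exact Or.inl ⟨hIA hxI, hxa⟩
    have hI'S : I' ⊆ S := by
      rintro x (rfl | ⟨hxI, _⟩)
      · exact hbS
      · exact hIS hxI
    have hI'ind : M.Indep I' := by
      rw [hInd]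
      refine ⟨hI'S, fun i hi => ?_⟩
      have hIF := ((hInd I).1 hIind).2 i hi
      by_cases hbF : b ∈ F i
      · have haF : a ∈ F i := hinit i hi a (hA ha) b hbF hab.le
        have hfin1 : ((I ∩ F i) \ {a}).Finite := (hIfin.inter_of_left _).diff
        have hEq : I' ∩ F i = insert b ((I ∩ F i) \ {a}) := by
          ext x
          simp only [hI'def, mem_inter_iff, mem_insert_iff, mem_diff, mem_singleton_iff]
          constructor
          · rintro ⟨rfl | ⟨hxI, hxa⟩, hxF⟩
            · exact Or.inl rfl
            · exact Or.inr ⟨⟨hxI, hxF⟩, hxa⟩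
          · rintro (rfl | ⟨⟨hxI, hxF⟩, hxa⟩)
            · exact ⟨Or.inl rfl, hbF⟩
            · exact ⟨Or.inr ⟨hxI, hxa⟩, hxF⟩
        rw [hEq, ncard_insert_of_notMem (by simp [hbI]) hfin1,
          ncard_diff_singleton_of_mem (mem_inter haI haF)]
        have hpos : 0 < (I ∩ F i).ncard :=
          (ncard_pos (hIfin.inter_of_left _)).2 ⟨a, haI, haF⟩
        omega
      · have hsub : I' ∩ F i ⊆ I ∩ F i := by
          rintro x ⟨(rfl | ⟨hxI, _⟩), hxF⟩
          · exact absurd hxF hbF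
          · exact ⟨hxI, hxF⟩
        exact le_trans (ncard_le_ncard hsub (hIfin.inter_of_left _)) hIF
    have hI'card : I'.ncard = I.ncard := by
      rw [hI'def, ncard_insert_of_notMem (by simp [hbI]) hIfin.diff,
        ncard_diff_singleton_of_mem haI]
      have hpos : 0 < I.ncard := (ncard_pos hIfin).2 ⟨a, haI⟩
      omega
    calc matRk M A = I'.ncard := by rw [hI'card, hIcard]
      _ ≤ matRk M T := le_csSup (hbd T) ⟨I', hI'T, hI'ind, rfl⟩
  · have hIT : I ⊆ T := fun x hx => Or.inl ⟨hIA hx, fun h => haI (h ▸ hx)⟩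
    calc matRk M A = I.ncard := hIcard.symm
      _ ≤ matRk M T := le_csSup (hbd T) ⟨I, hIT, hIind, rfl⟩
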